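/- Let U_s : ℝ⁺ → ℝ be three times continuously differentiable with U_s'(a) = 0 for some a > 0, let τ ∈ ℂ, and let V : ℝ\{0} → ℂ be three times continuously differentiable on each half-line and satisfy (τ + U_s''(a) z²/2) V'(z) − U_s''(a) z V(z) + i V'''(z) = 0 for z ≠ 0, with jumps [V] = −τ, [V'] = 0, [V''] = −U_s''(a) at z = 0. For ε ∈ (0,1] define w_ε := −U_s(a) + ε^{1/2} τ, v^{reg}_ε(y) := H(y−a)[U_s(y) − U_s(a) + ε^{1/2} τ], v^{sl}_ε(y) := ε^{1/2} V((y−a)/ε^{1/4}), and v_ε := v^{reg}_ε + v^{sl}_ε, where H is the Heaviside function. Then: (1) v_ε, v_ε' and v_ε'' have no jump across y = a (so v_ε extends to a C² function on ℝ⁺); (2) the pair (u^{app}, v^{app})(t,x,y) := e^{iε^{-1}(x + w_ε t)}( i v_ε'(y), ε^{-1} v_ε(y) ) satisfies ∂_x u^{app} + ∂_y v^{app} = 0; and (3) for all y ∈ ℝ⁺ with y ≠ a, ∂_t u^{app} + U_s ∂_x u^{app} + v^{app} U_s' − ∂_y² u^{app} = e^{iε^{-1}(x + w_ε t)} R^{app}_ε(y),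 where R^{app}_ε(y) = −ε^{-1}[U_s(y) − U_s(a) − U_s''(a)(y−a)²/2] (v^{sl}_ε)'(y) + ε^{-1}[U_s'(y) − U_s''(a)(y−a)] v^{sl}_ε(y) − i (v^{reg}_ε)'''(y). -/

import Mathlib

open Set Filter

/-!
STATEMENT 5: the frozen-coefficient approximate solution built from the regular
part and the shear-layer part: no jumps of v_ε, v_ε', v_ε'' across y = a,
divergence-free, and explicit remainder R^{app}_ε away from y = a.
-/

/-- Regular part `v^{reg}_ε(y) = H(y−a)[U_s(y) − U_s(a) + ε^{1/2}τ]`. -/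
noncomputable def vregF (Us : ℝ → ℝ) (a : ℝ) (τ : ℂ) (ε y : ℝ) : ℂ :=
  (if 0 < y - a then (1:ℂ) else 0) *
    (((Us y - Us a : ℝ) : ℂ) + ((ε ^ ((1:ℝ)/2) : ℝ) : ℂ) * τ)

/-- Shear-layer part `v^{sl}_ε(y) = ε^{1/2} V((y−a)/ε^{1/4})`. -/
noncomputable def vslF (V : ℝ → ℂ) (a : ℝ) (ε y : ℝ) : ℂ :=
  ((ε ^ ((1:ℝ)/2) : ℝ) : ℂ) * V ((y - a) / ε ^ ((1:ℝ)/4))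

/-- `v_ε = v^{reg}_ε + v^{sl}_ε`. -/
noncomputable def vepsF (Us : ℝ → ℝ) (V : ℝ → ℂ) (a : ℝ) (τ : ℂ) (ε y : ℝ) : ℂ :=
  vregF Us a τ ε y + vslF V a ε y

/-- Oscillatory phase `e^{iε⁻¹(x + w_ε t)}` with `w_ε = −U_s(a) + ε^{1/2}τ`. -/
noncomputable def phaseF (Us : ℝ → ℝ) (a : ℝ) (τ : ℂ) (ε t x : ℝ) : ℂ :=
  Complex.exp (Complex.I * ((ε⁻¹ : ℝ) : ℂ) *
    ((x : ℂ) + ((-(Us a) : ℝ) + ((ε ^ ((1:ℝ)/2) : ℝ) : ℂ) * τ) * (t : ℂ)))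

/-- Approximate tangential velocity `u^{app} = e^{iε⁻¹(x+w_ε t)} i v_ε'(y)`. -/
noncomputable def uappF (Us : ℝ → ℝ) (V : ℝ → ℂ) (a : ℝ) (τ : ℂ) (ε t x y : ℝ) : ℂ :=
  phaseF Us a τ ε t x * (Complex.I * deriv (vepsF Us V a τ ε) y)

/-- Approximate normal velocity `v^{app} = e^{iε⁻¹(x+w_ε t)} ε⁻¹ v_ε(y)`. -/
noncomputable def vappF (Us : ℝ → ℝ) (V : ℝ → ℂ) (a : ℝ) (τ : ℂ) (ε t x y : ℝ) : ℂ :=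
  phaseF Us a τ ε t x * (((ε⁻¹ : ℝ) : ℂ) * vepsF Us V a τ ε y)

/-- The remainder profile `R^{app}_ε`. -/
noncomputable def RappF (Us : ℝ → ℝ) (V : ℝ → ℂ) (a : ℝ) (τ : ℂ) (ε y : ℝ) : ℂ :=
  -((ε⁻¹ : ℝ) : ℂ) *
      ((Us y - Us a - iteratedDeriv 2 Us a * (y - a) ^ 2 / 2 : ℝ) : ℂ) *
      deriv (vslF V a ε) y
  + ((ε⁻¹ : ℝ) : ℂ) *
      ((deriv Us y - iteratedDeriv 2 Us a * (y - a) : ℝ) : ℂ) * vslF V a ε y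
  - Complex.I * iteratedDeriv 3 (vregF Us a τ ε) y

namespace FrozenAux

open Set Filter Complex

noncomputable def E1F (Us : ℝ → ℝ) (a : ℝ) : ℝ → ℂ :=
  fun y => if 0 < y - a then ((deriv Us y : ℝ) : ℂ) else 0
noncomputable def E2F (Us : ℝ → ℝ) (a : ℝ) : ℝ → ℂ :=
  fun y => if 0 < y - a then ((iteratedDeriv 2 Us y : ℝ) : ℂ) else 0
noncomputable def E3F (Us : ℝ → ℝ) (a : ℝ) : ℝ → ℂ :=
  fun y => if 0 < y - a then ((iteratedDeriv 3 Us y : ℝ) : ℂ) else 0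
noncomputable def S1F (V : ℝ → ℂ) (a ε : ℝ) : ℝ → ℂ :=
  fun y => ((ε ^ ((1:ℝ)/4) : ℝ) : ℂ) * deriv V ((y - a) / ε ^ ((1:ℝ)/4))
noncomputable def S2F (V : ℝ → ℂ) (a ε : ℝ) : ℝ → ℂ :=
  fun y => deriv (deriv V) ((y - a) / ε ^ ((1:ℝ)/4))
noncomputable def S3F (V : ℝ → ℂ) (a ε : ℝ) : ℝ → ℂ :=
  fun y => (((ε ^ ((1:ℝ)/4))⁻¹ : ℝ) : ℂ) * deriv (deriv (deriv V)) ((y - a) / ε ^ ((1:ℝ)/4))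
noncomputable def D1F (Us : ℝ → ℝ) (V : ℝ → ℂ) (a ε : ℝ) : ℝ → ℂ :=
  fun y => E1F Us a y + S1F V a ε y
noncomputable def D2F (Us : ℝ → ℝ) (V : ℝ → ℂ) (a ε : ℝ) : ℝ → ℂ :=
  fun y => E2F Us a y + S2F V a ε y
noncomputable def D3F (Us : ℝ → ℝ) (V : ℝ → ℂ) (a ε : ℝ) : ℝ → ℂ :=
  fun y => E3F Us a y + S3F V a ε y

/-- three honest derivatives from `ContDiffOn 3` on an open set -/
lemma c3 {E : Type*} [NormedAddCommGroup E] [NormedSpace ℝ E] {f : ℝ → E} {s : Set ℝ}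
    (hs : IsOpen s) (hf : ContDiffOn ℝ 3 f s) {z : ℝ} (hz : z ∈ s) :
    HasDerivAt f (deriv f z) z ∧ HasDerivAt (deriv f) (deriv (deriv f) z) z ∧
      HasDerivAt (deriv (deriv f)) (deriv (deriv (deriv f)) z) z := by
  have h1 : ContDiffOn ℝ 2 (deriv f) s := hf.deriv_of_isOpen hs (by norm_num)
  have h2 : ContDiffOn ℝ 1 (deriv (deriv f)) s := h1.deriv_of_isOpen hs (by norm_num)
  refine ⟨?_, ?_, ?_⟩
  · exact (((hf.contDiffAt (hs.mem_nhds hz)).differentiableAt (by norm_num)).hasDerivAt)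
  · exact (((h1.contDiffAt (hs.mem_nhds hz)).differentiableAt (by norm_num)).hasDerivAt)
  · exact (((h2.contDiffAt (hs.mem_nhds hz)).differentiableAt (by norm_num)).hasDerivAt)

/-- three honest derivatives of `V` away from `0` -/
lemma cV {V : ℝ → ℂ} (hV : ContDiffOn ℝ 3 V (Iio 0) ∧ ContDiffOn ℝ 3 V (Ioi 0))
    {z : ℝ} (hz : z ≠ 0) :
    HasDerivAt V (deriv V z) z ∧ HasDerivAt (deriv V) (deriv (deriv V) z) z ∧
      HasDerivAt (deriv (deriv V)) (deriv (deriv (deriv V)) z) z := by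
  rcases lt_or_gt_of_ne hz with h | h
  · exact c3 isOpen_Iio hV.1 h
  · exact c3 isOpen_Ioi hV.2 h

/-- generic: derivatives up to order 3 at a point, for a function smooth away from `a`. -/
lemma deriv3_eq {f F1 F2 F3 : ℝ → ℂ} {a y : ℝ} (hy : y ≠ a)
    (h1 : ∀ t, t ≠ a → HasDerivAt f (F1 t) t)
    (h2 : ∀ t, t ≠ a → HasDerivAt F1 (F2 t) t)
    (h3 : HasDerivAt F2 (F3 y) y) :
    deriv f y = F1 y ∧ iteratedDeriv 2 f y = F2 y ∧ iteratedDeriv 3 f y = F3 y := by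
  have hU : {t : ℝ | t ≠ a} ∈ nhds y := isOpen_compl_singleton.mem_nhds hy
  have e1 : deriv f =ᶠ[nhds y] F1 :=
    eventually_of_mem hU fun t ht => (h1 t ht).deriv
  have e2 : deriv F1 =ᶠ[nhds y] F2 :=
    eventually_of_mem hU fun t ht => (h2 t ht).deriv
  have i2 : iteratedDeriv 2 f y = F2 y := by
    rw [show (2:ℕ) = 1 + 1 from rfl, iteratedDeriv_succ, iteratedDeriv_one]
    rw [e1.deriv_eq]; exact e2.self_of_nhds
  refine ⟨(h1 y hy).deriv, i2, ?_⟩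
  have e2' : iteratedDeriv 2 f =ᶠ[nhds y] F2 := by
    have : iteratedDeriv 2 f = deriv (deriv f) := by
      rw [show (2:ℕ) = 1 + 1 from rfl, iteratedDeriv_succ, iteratedDeriv_one]
    rw [this]
    exact e1.deriv.trans e2
  rw [show (3:ℕ) = 2 + 1 from rfl, iteratedDeriv_succ, e2'.deriv_eq]
  exact h3.deriv

section main

variable {Us : ℝ → ℝ} {V : ℝ → ℂ} {a : ℝ} {τ : ℂ} {ε : ℝ}

lemma hr' (hε : 0 < ε) : 0 < ε ^ ((1:ℝ)/4) := Real.rpow_pos_of_pos hε _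

lemma hs2 (hε : 0 < ε) : ε ^ ((1:ℝ)/2) = (ε ^ ((1:ℝ)/4)) ^ 2 := by
  rw [← Real.rpow_natCast (ε ^ ((1:ℝ)/4)) 2, ← Real.rpow_mul hε.le]; norm_num

lemma he4 (hε : 0 < ε) : ε = (ε ^ ((1:ℝ)/4)) ^ 4 := by
  rw [← Real.rpow_natCast (ε ^ ((1:ℝ)/4)) 4, ← Real.rpow_mul hε.le]; norm_num

/-- derivatives of the shear-layer part away from `y = a` -/
lemma slDeriv (hV : ContDiffOn ℝ 3 V (Iio 0) ∧ ContDiffOn ℝ 3 V (Ioi 0)) (hε : 0 < ε)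
    {y : ℝ} (hy : y ≠ a) :
    HasDerivAt (vslF V a ε) (S1F V a ε y) y ∧
    HasDerivAt (S1F V a ε) (S2F V a ε y) y ∧
    HasDerivAt (S2F V a ε) (S3F V a ε y) y := by
  set r := ε ^ ((1:ℝ)/4) with hrdef
  have hr : 0 < r := hr' hε
  set z := (y - a) / r with hzdef
  have hz : z ≠ 0 := div_ne_zero (sub_ne_zero.2 hy) hr.ne'
  obtain ⟨hV1, hV2, hV3⟩ := cV hV hz
  have hφ : HasDerivAt (fun y' : ℝ => (y' - a) / r) (1 / r) y := by
    simpa using ((hasDerivAt_id y).sub_const a).div_const r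
  refine ⟨?_, ?_, ?_⟩
  · have h0 : HasDerivAt (fun y' : ℝ => V ((y' - a) / r)) ((1 / r) • deriv V z) y :=
      HasDerivAt.scomp (x := y) hV1 hφ
    have h1 := h0.const_mul ((ε ^ ((1:ℝ)/2) : ℝ) : ℂ)
    have heq : ((ε ^ ((1:ℝ)/2) : ℝ) : ℂ) * ((1 / r) • deriv V z) = ((r:ℝ):ℂ) * deriv V z := by
      rw [Complex.real_smul, ← mul_assoc, ← Complex.ofReal_mul,
        show ε ^ ((1:ℝ)/2) * (1/r) = r by rw [hs2 hε, ← hrdef, sq]; field_simp]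
    rw [heq] at h1
    exact h1
  · have h0 : HasDerivAt (fun y' : ℝ => deriv V ((y' - a) / r)) ((1 / r) • deriv (deriv V) z) y :=
      HasDerivAt.scomp (g₁ := deriv V) (x := y) hV2 hφ
    have h1 := h0.const_mul ((r:ℝ):ℂ)
    have heq : ((r:ℝ):ℂ) * ((1 / r) • deriv (deriv V) z) = deriv (deriv V) z := by
      rw [Complex.real_smul, ← mul_assoc, ← Complex.ofReal_mul,
        show r * (1/r) = 1 by field_simp]
      simp
    rw [heq] at h1
    exact h1
  · have h0 : HasDerivAt (fun y' : ℝ => deriv (deriv V) ((y' - a) / r))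
        ((1 / r) • deriv (deriv (deriv V)) z) y := HasDerivAt.scomp (g₁ := deriv (deriv V)) (x := y) hV3 hφ
    have heq : (1 / r) • deriv (deriv (deriv V)) z
        = ((r⁻¹ : ℝ) : ℂ) * deriv (deriv (deriv V)) z := by
      rw [Complex.real_smul, one_div]
    rw [heq] at h0
    exact h0

/-- derivatives of the regular part away from `y = a` -/
lemma regDeriv (hUs : ContDiffOn ℝ 3 Us (Ioi 0)) (ha : 0 < a)
    {y : ℝ} (hy : y ≠ a) :
    HasDerivAt (vregF Us a τ ε) (E1F Us a y) y ∧
    HasDerivAt (E1F Us a) (E2F Us a y) y ∧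
    HasDerivAt (E2F Us a) (E3F Us a y) y := by
  rcases lt_or_gt_of_ne hy with h | h
  · -- y < a : everything is locally 0
    have hev : ∀ᶠ t in nhds y, t ∈ Iio a := Iio_mem_nhds h
    have hz1 : vregF Us a τ ε =ᶠ[nhds y] fun _ => (0:ℂ) :=
      hev.mono fun t ht => by
        have hn : ¬ 0 < t - a := by simp only [mem_Iio] at ht; push_neg; linarith
        simp only [vregF, if_neg hn, zero_mul]
    have hz2 : E1F Us a =ᶠ[nhds y] fun _ => (0:ℂ) :=
      hev.mono fun t ht => by
        have hn : ¬ 0 < t - a := by simp only [mem_Iio] at ht; push_neg; linarith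
        simp only [E1F, if_neg hn]
    have hz3 : E2F Us a =ᶠ[nhds y] fun _ => (0:ℂ) :=
      hev.mono fun t ht => by
        have hn : ¬ 0 < t - a := by simp only [mem_Iio] at ht; push_neg; linarith
        simp only [E2F, if_neg hn]
    have hne : ¬ 0 < y - a := by push_neg; linarith
    refine ⟨?_, ?_, ?_⟩
    · simp only [E1F]; rw [if_neg hne]
      exact (hasDerivAt_const y (0:ℂ)).congr_of_eventuallyEq hz1
    · simp only [E2F]; rw [if_neg hne]
      exact (hasDerivAt_const y (0:ℂ)).congr_of_eventuallyEq hz2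
    · simp only [E3F]; rw [if_neg hne]
      exact (hasDerivAt_const y (0:ℂ)).congr_of_eventuallyEq hz3
  · -- y > a
    have hy0 : y ∈ Ioi (0:ℝ) := mem_Ioi.2 (lt_trans ha h)
    obtain ⟨hU1, hU2, hU3⟩ := c3 isOpen_Ioi hUs hy0
    have hev : ∀ᶠ t in nhds y, t ∈ Ioi a := Ioi_mem_nhds h
    have hpos : 0 < y - a := sub_pos.2 h
    have hz1 : vregF Us a τ ε =ᶠ[nhds y]
        fun t => ((Us t - Us a : ℝ) : ℂ) + ((ε ^ ((1:ℝ)/2) : ℝ) : ℂ) * τ :=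
      hev.mono fun t ht => by
        simp only [vregF, if_pos (sub_pos.2 (mem_Ioi.1 ht)), one_mul]
    have hz2 : E1F Us a =ᶠ[nhds y] fun t => ((deriv Us t : ℝ) : ℂ) :=
      hev.mono fun t ht => by simp only [E1F, if_pos (sub_pos.2 (mem_Ioi.1 ht))]
    have hz3 : E2F Us a =ᶠ[nhds y] fun t => ((iteratedDeriv 2 Us t : ℝ) : ℂ) :=
      hev.mono fun t ht => by simp only [E2F, if_pos (sub_pos.2 (mem_Ioi.1 ht))]
    have hi2 : iteratedDeriv 2 Us = deriv (deriv Us) := by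
      rw [show (2:ℕ) = 1 + 1 from rfl, iteratedDeriv_succ, iteratedDeriv_one]
    have hi3 : iteratedDeriv 3 Us = deriv (deriv (deriv Us)) := by
      rw [show (3:ℕ) = 2 + 1 from rfl, iteratedDeriv_succ, show (2:ℕ) = 1 + 1 from rfl,
        iteratedDeriv_succ, iteratedDeriv_one]
    refine ⟨?_, ?_, ?_⟩
    · have h0 : HasDerivAt (fun t => ((Us t - Us a : ℝ) : ℂ) + ((ε ^ ((1:ℝ)/2) : ℝ) : ℂ) * τ)
          ((deriv Us y : ℝ) : ℂ) y := by
        have := ((hU1.sub_const (Us a)).ofReal_comp (z := y)).add_const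
          (((ε ^ ((1:ℝ)/2) : ℝ) : ℂ) * τ)
        simpa using this
      simp only [E1F]; rw [if_pos hpos]
      exact h0.congr_of_eventuallyEq hz1
    · have h0 : HasDerivAt (fun t => ((deriv Us t : ℝ) : ℂ)) ((iteratedDeriv 2 Us y : ℝ) : ℂ) y := by
        rw [hi2]; exact hU2.ofReal_comp
      simp only [E2F]; rw [if_pos hpos]
      exact h0.congr_of_eventuallyEq hz2
    · have h0 : HasDerivAt (fun t => ((iteratedDeriv 2 Us t : ℝ) : ℂ))
          ((iteratedDeriv 3 Us y : ℝ) : ℂ) y := by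
        rw [hi2, hi3]; exact hU3.ofReal_comp
      simp only [E3F]; rw [if_pos hpos]
      exact h0.congr_of_eventuallyEq hz3

/-- derivatives of `v_ε` away from `y = a` -/
lemma vepsDeriv (hUs : ContDiffOn ℝ 3 Us (Ioi 0)) (ha : 0 < a)
    (hV : ContDiffOn ℝ 3 V (Iio 0) ∧ ContDiffOn ℝ 3 V (Ioi 0)) (hε : 0 < ε)
    {y : ℝ} (hy : y ≠ a) :
    HasDerivAt (vepsF Us V a τ ε) (D1F Us V a ε y) y ∧
    HasDerivAt (D1F Us V a ε) (D2F Us V a ε y) y ∧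
    HasDerivAt (D2F Us V a ε) (D3F Us V a ε y) y := by
  obtain ⟨e1, e2, e3⟩ := regDeriv (τ := τ) (ε := ε) hUs ha hy
  obtain ⟨s1, s2, s3⟩ := slDeriv hV hε hy
  exact ⟨e1.add s1, e2.add s2, e3.add s3⟩

end main

end FrozenAux
namespace FrozenAux

open Set Filter Complex

variable {Us : ℝ → ℝ} {V : ℝ → ℂ} {a : ℝ} {τ : ℂ} {ε : ℝ}

lemma tendsto_z_right (hε : 0 < ε) (a : ℝ) :
    Tendsto (fun y => (y - a) / ε ^ ((1:ℝ)/4)) (nhdsWithin a (Ioi a)) (nhdsWithin 0 (Ioi 0)) := by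
  have hr : 0 < ε ^ ((1:ℝ)/4) := hr' hε
  rw [tendsto_nhdsWithin_iff]
  constructor
  · have hc : Tendsto (fun y => (y - a) / ε ^ ((1:ℝ)/4)) (nhds a) (nhds 0) := by
      have hcc : Continuous (fun y : ℝ => (y - a) / ε ^ ((1:ℝ)/4)) := by fun_prop
      simpa using hcc.tendsto a
    exact hc.mono_left nhdsWithin_le_nhds
  · exact eventually_mem_nhdsWithin.mono fun y hy => mem_Ioi.2 (div_pos (sub_pos.2 hy) hr)

lemma tendsto_z_left (hε : 0 < ε) (a : ℝ) :
    Tendsto (fun y => (y - a) / ε ^ ((1:ℝ)/4)) (nhdsWithin a (Iio a)) (nhdsWithin 0 (Iio 0)) := by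
  have hr : 0 < ε ^ ((1:ℝ)/4) := hr' hε
  rw [tendsto_nhdsWithin_iff]
  constructor
  · have hc : Tendsto (fun y => (y - a) / ε ^ ((1:ℝ)/4)) (nhds a) (nhds 0) := by
      have hcc : Continuous (fun y : ℝ => (y - a) / ε ^ ((1:ℝ)/4)) := by fun_prop
      simpa using hcc.tendsto a
    exact hc.mono_left nhdsWithin_le_nhds
  · exact eventually_mem_nhdsWithin.mono fun y hy =>
      mem_Iio.2 (div_neg_of_neg_of_pos (sub_neg.2 hy) hr)

/-- the frozen-coefficient profile identity away from `y = a` -/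
lemma profile_identity (hUs : ContDiffOn ℝ 3 Us (Ioi 0)) (ha : 0 < a)
    (hV : ContDiffOn ℝ 3 V (Iio 0) ∧ ContDiffOn ℝ 3 V (Ioi 0)) (hε : 0 < ε)
    (hODE : ∀ z : ℝ, z ≠ 0 →
      (τ + ((iteratedDeriv 2 Us a * z ^ 2 / 2 : ℝ) : ℂ)) * deriv V z
        - ((iteratedDeriv 2 Us a * z : ℝ) : ℂ) * V z
        + Complex.I * iteratedDeriv 3 V z = 0)
    {y : ℝ} (hy : y ≠ a) :
    -((ε⁻¹ : ℝ) : ℂ) * (((Us y : ℝ) : ℂ) - ((Us a : ℝ) : ℂ) + ((ε ^ ((1:ℝ)/2) : ℝ) : ℂ) * τ)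
        * D1F Us V a ε y
      + ((ε⁻¹ : ℝ) : ℂ) * ((deriv Us y : ℝ) : ℂ) * vepsF Us V a τ ε y
      - Complex.I * D3F Us V a ε y
    = RappF Us V a τ ε y := by
  have hr : 0 < ε ^ ((1:ℝ)/4) := hr' hε
  have hrC : ((ε ^ ((1:ℝ)/4) : ℝ) : ℂ) ≠ 0 := by exact_mod_cast hr.ne'
  set r := ε ^ ((1:ℝ)/4) with hrdef
  set z := (y - a) / r with hzdef
  have hz : z ≠ 0 := div_ne_zero (sub_ne_zero.2 hy) hr.ne'
  have hODEz := hODE z hz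
  rw [show iteratedDeriv 3 V = deriv (deriv (deriv V)) by
    rw [show (3:ℕ) = 2 + 1 from rfl, iteratedDeriv_succ, show (2:ℕ) = 1 + 1 from rfl,
      iteratedDeriv_succ, iteratedDeriv_one]] at hODEz
  push_cast at hODEz
  have hsl1 : deriv (vslF V a ε) y = S1F V a ε y := (slDeriv hV hε hy).1.deriv
  have hreg3 : iteratedDeriv 3 (vregF Us a τ ε) y = E3F Us a y :=
    (deriv3_eq hy (fun t ht => (regDeriv (τ := τ) (ε := ε) hUs ha ht).1)
      (fun t ht => (regDeriv (τ := τ) (ε := ε) hUs ha ht).2.1)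
      (regDeriv (τ := τ) (ε := ε) hUs ha hy).2.2).2.2
  have hce : ((ε⁻¹ : ℝ) : ℂ) = (((r : ℝ) : ℂ))⁻¹ ^ (4:ℕ) := by
    have : ε⁻¹ = (r⁻¹) ^ (4:ℕ) := by
      rw [inv_pow]; exact congrArg Inv.inv (he4 hε)
    exact_mod_cast this
  have hse : ((ε ^ ((1:ℝ)/2) : ℝ) : ℂ) = (((r : ℝ) : ℂ)) ^ (2:ℕ) := by
    exact_mod_cast hs2 hε
  have hza : ((y : ℝ) : ℂ) - ((a : ℝ) : ℂ) = ((r : ℝ) : ℂ) * ((z : ℝ) : ℂ) := by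
    have : y - a = r * z := by rw [hzdef]; field_simp
    exact_mod_cast this
  rcases lt_or_gt_of_ne hy with h | h
  · have hn : ¬ 0 < y - a := by push_neg; linarith
    simp only [RappF, hsl1, hreg3, D1F, D3F, E1F, E3F, S1F, S3F, vepsF, vregF, vslF,
      if_neg hn, ← hrdef, ← hzdef]
    push_cast [hce, hse]
    rw [hza]
    field_simp
    linear_combination (-2 * (((r : ℝ) : ℂ)) ^ (3:ℕ)) * hODEz
  · have hp : 0 < y - a := sub_pos.2 h
    simp only [RappF, hsl1, hreg3, D1F, D3F, E1F, E3F, S1F, S3F, vepsF, vregF, vslF,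
      if_pos hp, one_mul, ← hrdef, ← hzdef]
    push_cast [hce, hse]
    rw [hza]
    field_simp
    linear_combination (-2 * (((r : ℝ) : ℂ)) ^ (3:ℕ)) * hODEz

end FrozenAux
namespace FrozenAux

open Set Filter Complex

variable {Us : ℝ → ℝ} {V : ℝ → ℂ} {a : ℝ} {τ : ℂ} {ε : ℝ}

lemma ofReal_tendsto_sub (hUs : ContDiffOn ℝ 3 Us (Ioi 0)) (ha : 0 < a) :
    Tendsto (fun y => ((Us y - Us a : ℝ) : ℂ)) (nhds a) (nhds 0) := by
  have hc : ContinuousAt Us a := (c3 isOpen_Ioi hUs (mem_Ioi.2 ha)).1.continuousAt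
  have h0 : Tendsto (fun y => Us y - Us a) (nhds a) (nhds 0) := by
    have := Tendsto.sub (f := Us) (g := fun _ => Us a) hc tendsto_const_nhds
    simpa using this
  have h1 := (Complex.continuous_ofReal.tendsto 0).comp h0
  rw [Complex.ofReal_zero] at h1
  exact h1

lemma vright {Vp0 : ℂ} (hUs : ContDiffOn ℝ 3 Us (Ioi 0)) (ha : 0 < a) (hε : 0 < ε)
    (hl0 : Tendsto V (nhdsWithin 0 (Ioi 0)) (nhds Vp0)) :
    Tendsto (vepsF Us V a τ ε) (nhdsWithin a (Ioi a))
      (nhds (((ε ^ ((1:ℝ)/2) : ℝ) : ℂ) * τ + ((ε ^ ((1:ℝ)/2) : ℝ) : ℂ) * Vp0)) := by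
  have hev : vepsF Us V a τ ε =ᶠ[nhdsWithin a (Ioi a)]
      fun y => (((Us y - Us a : ℝ) : ℂ) + ((ε ^ ((1:ℝ)/2) : ℝ) : ℂ) * τ)
        + ((ε ^ ((1:ℝ)/2) : ℝ) : ℂ) * V ((y - a) / ε ^ ((1:ℝ)/4)) :=
    eventually_mem_nhdsWithin.mono fun y hy => by
      simp only [vepsF, vregF, vslF, if_pos (sub_pos.2 (mem_Ioi.1 hy)), one_mul]
  rw [tendsto_congr' hev]
  have h1 := (ofReal_tendsto_sub hUs ha).mono_left
    (nhdsWithin_le_nhds : nhdsWithin a (Ioi a) ≤ nhds a)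
  have h2 : Tendsto (fun y => V ((y - a) / ε ^ ((1:ℝ)/4))) (nhdsWithin a (Ioi a)) (nhds Vp0) :=
    hl0.comp (tendsto_z_right hε a)
  have key : Tendsto
      (fun y => (((Us y - Us a : ℝ) : ℂ) + ((ε ^ ((1:ℝ)/2) : ℝ) : ℂ) * τ)
        + ((ε ^ ((1:ℝ)/2) : ℝ) : ℂ) * V ((y - a) / ε ^ ((1:ℝ)/4)))
      (nhdsWithin a (Ioi a))
      (nhds ((0 + ((ε ^ ((1:ℝ)/2) : ℝ) : ℂ) * τ) + ((ε ^ ((1:ℝ)/2) : ℝ) : ℂ) * Vp0)) :=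
    (h1.add tendsto_const_nhds).add (tendsto_const_nhds.mul h2)
  simpa using key

lemma vleft {Vm0 : ℂ} (hε : 0 < ε)
    (hl0' : Tendsto V (nhdsWithin 0 (Iio 0)) (nhds Vm0)) :
    Tendsto (vepsF Us V a τ ε) (nhdsWithin a (Iio a))
      (nhds (((ε ^ ((1:ℝ)/2) : ℝ) : ℂ) * Vm0)) := by
  have hev : vepsF Us V a τ ε =ᶠ[nhdsWithin a (Iio a)]
      fun y => ((ε ^ ((1:ℝ)/2) : ℝ) : ℂ) * V ((y - a) / ε ^ ((1:ℝ)/4)) :=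
    eventually_mem_nhdsWithin.mono fun y hy => by
      have hn : ¬ 0 < y - a := by simp only [mem_Iio] at hy; push_neg; linarith
      simp only [vepsF, vregF, vslF, if_neg hn, zero_mul, zero_add]
  rw [tendsto_congr' hev]
  exact tendsto_const_nhds.mul (hl0'.comp (tendsto_z_left hε a))

lemma d1right {Vp1 : ℂ} (hUs : ContDiffOn ℝ 3 Us (Ioi 0)) (ha : 0 < a) (hε : 0 < ε)
    (hl1 : Tendsto (deriv V) (nhdsWithin 0 (Ioi 0)) (nhds Vp1)) :
    Tendsto (D1F Us V a ε) (nhdsWithin a (Ioi a))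
      (nhds (((deriv Us a : ℝ) : ℂ) + ((ε ^ ((1:ℝ)/4) : ℝ) : ℂ) * Vp1)) := by
  have hev : D1F Us V a ε =ᶠ[nhdsWithin a (Ioi a)]
      fun y => ((deriv Us y : ℝ) : ℂ)
        + ((ε ^ ((1:ℝ)/4) : ℝ) : ℂ) * deriv V ((y - a) / ε ^ ((1:ℝ)/4)) :=
    eventually_mem_nhdsWithin.mono fun y hy => by
      simp only [D1F, E1F, S1F, if_pos (sub_pos.2 (mem_Ioi.1 hy))]
  rw [tendsto_congr' hev]
  have hc : ContinuousAt (deriv Us) a := (c3 isOpen_Ioi hUs (mem_Ioi.2 ha)).2.1.continuousAt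
  have h1 : Tendsto (fun y => ((deriv Us y : ℝ) : ℂ)) (nhdsWithin a (Ioi a))
      (nhds ((deriv Us a : ℝ) : ℂ)) :=
    ((Complex.continuous_ofReal.tendsto _).comp hc).mono_left nhdsWithin_le_nhds
  exact h1.add (tendsto_const_nhds.mul (hl1.comp (tendsto_z_right hε a)))

lemma d1left {Vm1 : ℂ} (hε : 0 < ε)
    (hl1' : Tendsto (deriv V) (nhdsWithin 0 (Iio 0)) (nhds Vm1)) :
    Tendsto (D1F Us V a ε) (nhdsWithin a (Iio a))
      (nhds (((ε ^ ((1:ℝ)/4) : ℝ) : ℂ) * Vm1)) := by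
  have hev : D1F Us V a ε =ᶠ[nhdsWithin a (Iio a)]
      fun y => ((ε ^ ((1:ℝ)/4) : ℝ) : ℂ) * deriv V ((y - a) / ε ^ ((1:ℝ)/4)) :=
    eventually_mem_nhdsWithin.mono fun y hy => by
      have hn : ¬ 0 < y - a := by simp only [mem_Iio] at hy; push_neg; linarith
      simp only [D1F, E1F, S1F, if_neg hn, zero_add]
  rw [tendsto_congr' hev]
  exact tendsto_const_nhds.mul (hl1'.comp (tendsto_z_left hε a))

lemma d2right {Vp2 : ℂ} (hUs : ContDiffOn ℝ 3 Us (Ioi 0)) (ha : 0 < a) (hε : 0 < ε)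
    (hl2 : Tendsto (deriv (deriv V)) (nhdsWithin 0 (Ioi 0)) (nhds Vp2)) :
    Tendsto (D2F Us V a ε) (nhdsWithin a (Ioi a))
      (nhds (((iteratedDeriv 2 Us a : ℝ) : ℂ) + Vp2)) := by
  have hev : D2F Us V a ε =ᶠ[nhdsWithin a (Ioi a)]
      fun y => ((iteratedDeriv 2 Us y : ℝ) : ℂ) + deriv (deriv V) ((y - a) / ε ^ ((1:ℝ)/4)) :=
    eventually_mem_nhdsWithin.mono fun y hy => by
      simp only [D2F, E2F, S2F, if_pos (sub_pos.2 (mem_Ioi.1 hy))]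
  rw [tendsto_congr' hev]
  have hc : ContinuousAt (deriv (deriv Us)) a :=
    (c3 isOpen_Ioi hUs (mem_Ioi.2 ha)).2.2.continuousAt
  have hc2 : ContinuousAt (iteratedDeriv 2 Us) a := by
    rw [show iteratedDeriv 2 Us = deriv (deriv Us) by
      rw [show (2:ℕ) = 1 + 1 from rfl, iteratedDeriv_succ, iteratedDeriv_one]]
    exact hc
  have h1 : Tendsto (fun y => ((iteratedDeriv 2 Us y : ℝ) : ℂ)) (nhdsWithin a (Ioi a))
      (nhds ((iteratedDeriv 2 Us a : ℝ) : ℂ)) :=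
    ((Complex.continuous_ofReal.tendsto _).comp hc2).mono_left nhdsWithin_le_nhds
  exact h1.add (hl2.comp (tendsto_z_right hε a))

lemma d2left {Vm2 : ℂ} (hε : 0 < ε)
    (hl2' : Tendsto (deriv (deriv V)) (nhdsWithin 0 (Iio 0)) (nhds Vm2)) :
    Tendsto (D2F Us V a ε) (nhdsWithin a (Iio a)) (nhds Vm2) := by
  have hev : D2F Us V a ε =ᶠ[nhdsWithin a (Iio a)]
      fun y => deriv (deriv V) ((y - a) / ε ^ ((1:ℝ)/4)) :=
    eventually_mem_nhdsWithin.mono fun y hy => by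
      have hn : ¬ 0 < y - a := by simp only [mem_Iio] at hy; push_neg; linarith
      simp only [D2F, E2F, S2F, if_neg hn, zero_add]
  rw [tendsto_congr' hev]
  exact hl2'.comp (tendsto_z_left hε a)

end FrozenAux

theorem frozen_coefficient_approximation
    (Us : ℝ → ℝ) (hUs : ContDiffOn ℝ 3 Us (Ioi 0))
    (a : ℝ) (ha : 0 < a) (hcrit : deriv Us a = 0)
    (τ : ℂ) (V : ℝ → ℂ)
    (hV : ContDiffOn ℝ 3 V (Iio 0) ∧ ContDiffOn ℝ 3 V (Ioi 0))
    (hODE : ∀ z : ℝ, z ≠ 0 →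
      (τ + ((iteratedDeriv 2 Us a * z ^ 2 / 2 : ℝ) : ℂ)) * deriv V z
        - ((iteratedDeriv 2 Us a * z : ℝ) : ℂ) * V z
        + Complex.I * iteratedDeriv 3 V z = 0)
    (Vp0 Vm0 Vp1 Vm1 Vp2 Vm2 : ℂ)
    (hl0 : Tendsto V (nhdsWithin 0 (Ioi 0)) (nhds Vp0))
    (hl0' : Tendsto V (nhdsWithin 0 (Iio 0)) (nhds Vm0))
    (hj0 : Vp0 - Vm0 = -τ)
    (hl1 : Tendsto (deriv V) (nhdsWithin 0 (Ioi 0)) (nhds Vp1))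
    (hl1' : Tendsto (deriv V) (nhdsWithin 0 (Iio 0)) (nhds Vm1))
    (hj1 : Vp1 - Vm1 = 0)
    (hl2 : Tendsto (iteratedDeriv 2 V) (nhdsWithin 0 (Ioi 0)) (nhds Vp2))
    (hl2' : Tendsto (iteratedDeriv 2 V) (nhdsWithin 0 (Iio 0)) (nhds Vm2))
    (hj2 : Vp2 - Vm2 = -((iteratedDeriv 2 Us a : ℝ) : ℂ))
    (ε : ℝ) (hε : ε ∈ Ioc (0:ℝ) 1) :
    -- (1) v_ε, v_ε', v_ε'' have no jump across y = a, and v_ε extends to a C²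
    --     function on ℝ⁺
    ((∃ L0 : ℂ, Tendsto (vepsF Us V a τ ε) (nhdsWithin a {a}ᶜ) (nhds L0)) ∧
     (∃ L1 : ℂ, Tendsto (deriv (vepsF Us V a τ ε)) (nhdsWithin a {a}ᶜ) (nhds L1)) ∧
     (∃ L2 : ℂ, Tendsto (iteratedDeriv 2 (vepsF Us V a τ ε)) (nhdsWithin a {a}ᶜ) (nhds L2)) ∧
     (∃ g : ℝ → ℂ, ContDiffOn ℝ 2 g (Ioi 0) ∧
        ∀ y ∈ Ioi (0:ℝ), y ≠ a → g y = vepsF Us V a τ ε y)) ∧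
    -- (2) divergence free
    (∀ t x : ℝ, ∀ y > (0:ℝ),
      deriv (fun x' => uappF Us V a τ ε t x' y) x
        + deriv (fun y' => vappF Us V a τ ε t x y') y = 0) ∧
    -- (3) remainder identity for y ≠ a
    (∀ t x : ℝ, ∀ y > (0:ℝ), y ≠ a →
      deriv (fun t' => uappF Us V a τ ε t' x y) t
        + (Us y : ℂ) * deriv (fun x' => uappF Us V a τ ε t x' y) x
        + vappF Us V a τ ε t x y * ((deriv Us y : ℝ) : ℂ)
        - iteratedDeriv 2 (fun y' => uappF Us V a τ ε t x y') y
      = phaseF Us a τ ε t x * RappF Us V a τ ε y) := by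
  obtain ⟨hε0, -⟩ := hε
  have hi2V : iteratedDeriv 2 V = deriv (deriv V) := by
    rw [show (2:ℕ) = 1 + 1 from rfl, iteratedDeriv_succ, iteratedDeriv_one]
  have hl2c : Tendsto (deriv (deriv V)) (nhdsWithin 0 (Ioi 0)) (nhds Vp2) := by
    rwa [hi2V] at hl2
  have hl2c' : Tendsto (deriv (deriv V)) (nhdsWithin 0 (Iio 0)) (nhds Vm2) := by
    rwa [hi2V] at hl2'
  have hD : ∀ t : ℝ, t ≠ a →
      HasDerivAt (vepsF Us V a τ ε) (FrozenAux.D1F Us V a ε t) t ∧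
      HasDerivAt (FrozenAux.D1F Us V a ε) (FrozenAux.D2F Us V a ε t) t ∧
      HasDerivAt (FrozenAux.D2F Us V a ε) (FrozenAux.D3F Us V a ε t) t :=
    fun t ht => FrozenAux.vepsDeriv hUs ha hV hε0 ht
  have hd1 : ∀ t, t ≠ a → deriv (vepsF Us V a τ ε) t = FrozenAux.D1F Us V a ε t :=
    fun t ht => (FrozenAux.deriv3_eq ht (fun u hu => (hD u hu).1)
      (fun u hu => (hD u hu).2.1) (hD t ht).2.2).1
  have hd2 : ∀ t, t ≠ a →
      iteratedDeriv 2 (vepsF Us V a τ ε) t = FrozenAux.D2F Us V a ε t :=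
    fun t ht => (FrozenAux.deriv3_eq ht (fun u hu => (hD u hu).1)
      (fun u hu => (hD u hu).2.1) (hD t ht).2.2).2.1
  -- combined punctured limits
  have hlim0 : Tendsto (vepsF Us V a τ ε) (nhdsWithin a {a}ᶜ)
      (nhds (((ε ^ ((1:ℝ)/2) : ℝ) : ℂ) * Vm0)) := by
    rw [← nhdsLT_sup_nhdsGT, tendsto_sup]
    refine ⟨FrozenAux.vleft hε0 hl0', ?_⟩
    have e : ((ε ^ ((1:ℝ)/2) : ℝ) : ℂ) * τ + ((ε ^ ((1:ℝ)/2) : ℝ) : ℂ) * Vp0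
        = ((ε ^ ((1:ℝ)/2) : ℝ) : ℂ) * Vm0 := by
      linear_combination ((ε ^ ((1:ℝ)/2) : ℝ) : ℂ) * hj0
    exact e ▸ FrozenAux.vright hUs ha hε0 hl0
  have hlim1 : Tendsto (FrozenAux.D1F Us V a ε) (nhdsWithin a {a}ᶜ)
      (nhds (((ε ^ ((1:ℝ)/4) : ℝ) : ℂ) * Vm1)) := by
    rw [← nhdsLT_sup_nhdsGT, tendsto_sup]
    refine ⟨FrozenAux.d1left hε0 hl1', ?_⟩
    have e : ((deriv Us a : ℝ) : ℂ) + ((ε ^ ((1:ℝ)/4) : ℝ) : ℂ) * Vp1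
        = ((ε ^ ((1:ℝ)/4) : ℝ) : ℂ) * Vm1 := by
      rw [hcrit]; push_cast
      linear_combination ((ε ^ ((1:ℝ)/4) : ℝ) : ℂ) * hj1
    exact e ▸ FrozenAux.d1right hUs ha hε0 hl1
  have hlim2 : Tendsto (FrozenAux.D2F Us V a ε) (nhdsWithin a {a}ᶜ) (nhds Vm2) := by
    rw [← nhdsLT_sup_nhdsGT, tendsto_sup]
    refine ⟨FrozenAux.d2left hε0 hl2c', ?_⟩
    have e : ((iteratedDeriv 2 Us a : ℝ) : ℂ) + Vp2 = Vm2 := by linear_combination hj2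
    exact e ▸ FrozenAux.d2right hUs ha hε0 hl2c
  have hcompl : ∀ {t : ℝ}, t ≠ a → {u : ℝ | u ≠ a} ∈ nhds t :=
    fun ht => isOpen_compl_singleton.mem_nhds ht
  refine ⟨⟨⟨_, hlim0⟩, ⟨((ε ^ ((1:ℝ)/4) : ℝ) : ℂ) * Vm1, ?_⟩, ⟨Vm2, ?_⟩, ?_⟩, ?_, ?_⟩
  · -- limit of deriv v_ε
    have hev : deriv (vepsF Us V a τ ε) =ᶠ[nhdsWithin a {a}ᶜ] FrozenAux.D1F Us V a ε :=
      eventually_mem_nhdsWithin.mono fun t ht => hd1 t ht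
    exact (tendsto_congr' hev).2 hlim1
  · -- limit of iteratedDeriv 2 v_ε
    have hev : iteratedDeriv 2 (vepsF Us V a τ ε) =ᶠ[nhdsWithin a {a}ᶜ]
        FrozenAux.D2F Us V a ε :=
      eventually_mem_nhdsWithin.mono fun t ht => hd2 t ht
    exact (tendsto_congr' hev).2 hlim2
  · -- C² extension
    set g0 : ℝ → ℂ :=
      Function.update (vepsF Us V a τ ε) a (((ε ^ ((1:ℝ)/2) : ℝ) : ℂ) * Vm0) with hg0def
    set g1 : ℝ → ℂ :=
      Function.update (FrozenAux.D1F Us V a ε) a (((ε ^ ((1:ℝ)/4) : ℝ) : ℂ) * Vm1) with hg1def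
    set g2 : ℝ → ℂ := Function.update (FrozenAux.D2F Us V a ε) a Vm2 with hg2def
    have hg0ev : ∀ {t : ℝ}, t ≠ a → g0 =ᶠ[nhds t] vepsF Us V a τ ε :=
      fun ht => eventually_of_mem (hcompl ht) fun u hu => Function.update_of_ne hu _ _
    have hg1ev : ∀ {t : ℝ}, t ≠ a → g1 =ᶠ[nhds t] FrozenAux.D1F Us V a ε :=
      fun ht => eventually_of_mem (hcompl ht) fun u hu => Function.update_of_ne hu _ _
    have hg2ev : ∀ {t : ℝ}, t ≠ a → g2 =ᶠ[nhds t] FrozenAux.D2F Us V a ε :=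
      fun ht => eventually_of_mem (hcompl ht) fun u hu => Function.update_of_ne hu _ _
    have hgne : ∀ t, t ≠ a → HasDerivAt g0 (g1 t) t := by
      intro t ht
      rw [hg1def, Function.update_of_ne ht]
      exact (hD t ht).1.congr_of_eventuallyEq (hg0ev ht)
    have hg1ne : ∀ t, t ≠ a → HasDerivAt g1 (g2 t) t := by
      intro t ht
      rw [hg2def, Function.update_of_ne ht]
      exact (hD t ht).2.1.congr_of_eventuallyEq (hg1ev ht)
    have hca0 : ContinuousAt g0 a := by
      apply continuousWithinAt_compl_self.1
      have hev : g0 =ᶠ[nhdsWithin a {a}ᶜ] vepsF Us V a τ ε :=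
        eventually_mem_nhdsWithin.mono fun u hu => Function.update_of_ne hu _ _
      unfold ContinuousWithinAt
      rw [tendsto_congr' hev, hg0def, Function.update_self]
      exact hlim0
    have hca1 : ContinuousAt g1 a := by
      apply continuousWithinAt_compl_self.1
      have hev : g1 =ᶠ[nhdsWithin a {a}ᶜ] FrozenAux.D1F Us V a ε :=
        eventually_mem_nhdsWithin.mono fun u hu => Function.update_of_ne hu _ _
      unfold ContinuousWithinAt
      rw [tendsto_congr' hev, hg1def, Function.update_self]
      exact hlim1
    have hca2 : ContinuousAt g2 a := by
      apply continuousWithinAt_compl_self.1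
      have hev : g2 =ᶠ[nhdsWithin a {a}ᶜ] FrozenAux.D2F Us V a ε :=
        eventually_mem_nhdsWithin.mono fun u hu => Function.update_of_ne hu _ _
      unfold ContinuousWithinAt
      rw [tendsto_congr' hev, hg2def, Function.update_self]
      exact hlim2
    have hg0all : ∀ t, HasDerivAt g0 (g1 t) t := by
      intro t
      by_cases ht : t = a
      · subst ht; exact hasDerivAt_of_hasDerivAt_of_ne hgne hca0 hca1
      · exact hgne t ht
    have hg1all : ∀ t, HasDerivAt g1 (g2 t) t := by
      intro t
      by_cases ht : t = a
      · subst ht; exact hasDerivAt_of_hasDerivAt_of_ne hg1ne hca1 hca2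
      · exact hg1ne t ht
    have hcg2 : Continuous g2 := by
      rw [continuous_iff_continuousAt]
      intro t
      by_cases ht : t = a
      · subst ht; exact hca2
      · exact ((hD t ht).2.2.continuousAt).congr (hg2ev ht).symm
    have hcd : ContDiff ℝ 2 g0 := by
      rw [show (2 : WithTop ℕ∞) = 1 + 1 by norm_num, contDiff_succ_iff_deriv]
      refine ⟨fun t => (hg0all t).differentiableAt, by simp, ?_⟩
      rw [show deriv g0 = g1 from funext fun t => (hg0all t).deriv, contDiff_one_iff_deriv]
      exact ⟨fun t => (hg1all t).differentiableAt,
        by rw [show deriv g1 = g2 from funext fun t => (hg1all t).deriv]; exact hcg2⟩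
    exact ⟨g0, hcd.contDiffOn, fun y _ hya => Function.update_of_ne hya _ _⟩
  · -- divergence free
    intro t x y _
    have h1 : ∀ u : ℝ, HasDerivAt (fun v : ℝ => ((v : ℝ) : ℂ)) 1 u := by
      intro u
      simpa using (hasDerivAt_id u).ofReal_comp
    have hax : HasDerivAt (fun x' : ℝ => uappF Us V a τ ε t x' y)
        (phaseF Us a τ ε t x * (Complex.I * ((ε⁻¹ : ℝ) : ℂ) * 1)
          * (Complex.I * deriv (vepsF Us V a τ ε) y)) x := by
      have h2 := (((h1 x).add_const
        (((((-(Us a) : ℝ) : ℂ)) + ((ε ^ ((1:ℝ)/2) : ℝ) : ℂ) * τ) * (t : ℂ))).const_mul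
        (Complex.I * ((ε⁻¹ : ℝ) : ℂ)))
      exact (h2.cexp).mul_const (Complex.I * deriv (vepsF Us V a τ ε) y)
    have hay : deriv (fun y' => vappF Us V a τ ε t x y') y
        = phaseF Us a τ ε t x * ((ε⁻¹ : ℝ) : ℂ) * deriv (vepsF Us V a τ ε) y := by
      have hfun : (fun y' => vappF Us V a τ ε t x y')
          = fun y' => (phaseF Us a τ ε t x * ((ε⁻¹ : ℝ) : ℂ)) * vepsF Us V a τ ε y' := by
        funext y'; simp only [vappF]; ring
      rw [hfun, deriv_const_mul_field]
    rw [hax.deriv, hay]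
    linear_combination (phaseF Us a τ ε t x * ((ε⁻¹ : ℝ) : ℂ)
      * deriv (vepsF Us V a τ ε) y) * Complex.I_mul_I
  · -- remainder identity
    intro t x y hy0 hya
    have h1 : ∀ u : ℝ, HasDerivAt (fun v : ℝ => ((v : ℝ) : ℂ)) 1 u := by
      intro u
      simpa using (hasDerivAt_id u).ofReal_comp
    have hax : HasDerivAt (fun x' : ℝ => uappF Us V a τ ε t x' y)
        (phaseF Us a τ ε t x * (Complex.I * ((ε⁻¹ : ℝ) : ℂ) * 1)
          * (Complex.I * deriv (vepsF Us V a τ ε) y)) x := by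
      have h2 := (((h1 x).add_const
        (((((-(Us a) : ℝ) : ℂ)) + ((ε ^ ((1:ℝ)/2) : ℝ) : ℂ) * τ) * (t : ℂ))).const_mul
        (Complex.I * ((ε⁻¹ : ℝ) : ℂ)))
      exact (h2.cexp).mul_const (Complex.I * deriv (vepsF Us V a τ ε) y)
    have hat : HasDerivAt (fun t' : ℝ => uappF Us V a τ ε t' x y)
        (phaseF Us a τ ε t x * (Complex.I * ((ε⁻¹ : ℝ) : ℂ)
            * (((((-(Us a) : ℝ) : ℂ)) + ((ε ^ ((1:ℝ)/2) : ℝ) : ℂ) * τ) * 1))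
          * (Complex.I * deriv (vepsF Us V a τ ε) y)) t := by
      have h2 := ((((h1 t).const_mul
        ((((-(Us a) : ℝ) : ℂ)) + ((ε ^ ((1:ℝ)/2) : ℝ) : ℂ) * τ)).const_add
        ((x : ℝ) : ℂ)).const_mul (Complex.I * ((ε⁻¹ : ℝ) : ℂ)))
      exact (h2.cexp).mul_const (Complex.I * deriv (vepsF Us V a τ ε) y)
    have he1 : (fun y' => uappF Us V a τ ε t x y') =ᶠ[nhds y]
        fun y' => (phaseF Us a τ ε t x * Complex.I) * FrozenAux.D1F Us V a ε y' :=
      eventually_of_mem (hcompl hya) fun u hu => by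
        simp only [uappF]; rw [hd1 u hu]; ring
    have he3 : deriv (fun y' => uappF Us V a τ ε t x y') =ᶠ[nhds y]
        fun y' => (phaseF Us a τ ε t x * Complex.I) * FrozenAux.D2F Us V a ε y' := by
      refine (he1.deriv.trans (Filter.EventuallyEq.of_eq (deriv_const_mul_field' _))).trans ?_
      exact eventually_of_mem (hcompl hya) fun u hu => by simp only [(hD u hu).2.1.deriv]
    have hiter : iteratedDeriv 2 (fun y' => uappF Us V a τ ε t x y') y
        = (phaseF Us a τ ε t x * Complex.I) * FrozenAux.D3F Us V a ε y := by
      rw [show (2:ℕ) = 1 + 1 from rfl, iteratedDeriv_succ, iteratedDeriv_one]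
      rw [he3.deriv_eq, deriv_const_mul_field, (hD y hya).2.2.deriv]
    have hprof := FrozenAux.profile_identity hUs ha hV hε0 hODE hya
    rw [hat.deriv, hax.deriv, hiter]
    simp only [vappF]
    rw [hd1 y hya]
    push_cast at hprof ⊢
    linear_combination phaseF Us a τ ε t x * hprof
      + (phaseF Us a τ ε t x * (((ε : ℝ) : ℂ))⁻¹ * FrozenAux.D1F Us V a ε y
          * (-((Us a : ℝ) : ℂ) + ((ε ^ ((1:ℝ)/2) : ℝ) : ℂ) * τ + ((Us y : ℝ) : ℂ)))
        * Complex.I_mul_I
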